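/- Over the alphabet Σ = {a,b,c}, the language (a+b)* a c^+ equals the set of words w such that: ac appears as a factor of w or (ac)^2 appears as a subword of w; and there is no factorization w = x y with (ca appearing as factor of x, or (ca)^2 subword of x) and (a appearing in y); and there is no factorization w = x y with (ca appearing as factor of x, or (ca)^2 subword of x) and (b appearing in y). In symbols: (a+b)* a c^+ = ⟨ac⟩_2 ∩ (⟨c,a⟩_2)^∁ ∩ (⟨c,b⟩_2)^∁. -/

import Mathlib

/-- `u^l`: the concatenation of `l` copies of the word `u`. -/
def wpow {α : Type*} (u : List α) (l : ℕ) : List α := (List.replicate l u).flatten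

/-- Concatenation of two languages. -/
def lconc {α : Type*} (L K : Set (List α)) : Set (List α) :=
  {w | ∃ x ∈ L, ∃ y ∈ K, w = x ++ y}

/-- `⟨u⟩_l = Σ* u Σ* ∪ (u^l ⧢ Σ*)`: words containing `u` as a factor
or `u^l` as a subword. -/
def cc {α : Type*} (u : List α) (l : ℕ) : Set (List α) :=
  {w | u <:+: w ∨ (wpow u l).Sublist w}

/-- The three-letter alphabet `{a, b, c}`. -/
inductive ABC : Type
  | a | b | c
deriving DecidableEq

open ABC List

lemma cc_single_iff (x : ABC) (w : List ABC) : w ∈ cc [x] 2 ↔ x ∈ w := by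
  constructor
  · rintro (h | h)
    · exact h.sublist.subset (mem_singleton_self x)
    · exact h.subset (by simp [wpow])
  · intro h
    obtain ⟨s, t, rfl⟩ := List.append_of_mem h
    exact Or.inl ⟨s, t, by simp⟩

lemma no_c (u : List ABC) (hu : ∀ x ∈ u, x = ABC.a ∨ x = ABC.b) : ABC.c ∉ u := by
  intro h
  rcases hu _ h with h' | h' <;> exact absurd h' (by simp)

/-- key lemma for the complement conditions -/
lemma no_split (u : List ABC) (hu : ∀ x ∈ u, x = ABC.a ∨ x = ABC.b) (m : ℕ)
    (d : ABC) (hd : d ≠ ABC.c) (x y : List ABC)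
    (hxy : u ++ ABC.a :: List.replicate m ABC.c = x ++ y)
    (hc : ABC.c ∈ x) (hdy : d ∈ y) : False := by
  have hw : u ++ ABC.a :: List.replicate m ABC.c
      = (u ++ [ABC.a]) ++ List.replicate m ABC.c := by simp
  rcases le_or_gt x.length (u ++ [ABC.a]).length with hle | hlt
  · have hx : x <+: (u ++ [ABC.a]) :=
      List.prefix_of_prefix_length_le ⟨y, hxy.symm⟩ ⟨_, hw.symm⟩ hle
    have : ABC.c ∈ u ++ [ABC.a] := hx.sublist.subset hc
    rcases List.mem_append.mp this with h | h
    · exact no_c u hu h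
    · simp at h
  · have hlt' : u.length + 1 < x.length := by simpa using hlt
    have hlen0 : u.length + (m + 1) = x.length + y.length := by
      have := congrArg List.length hxy
      simpa using this
    have hy : y <:+ List.replicate m ABC.c := by
      have h1 : y.reverse <+: (u ++ ABC.a :: List.replicate m ABC.c).reverse :=
        ⟨x.reverse, by rw [hxy]; simp⟩
      have h2 : (List.replicate m ABC.c).reverse
          <+: (u ++ ABC.a :: List.replicate m ABC.c).reverse :=
        ⟨(u ++ [ABC.a]).reverse, by rw [hw]; simp⟩
      have hlen : y.reverse.length ≤ (List.replicate m ABC.c).reverse.length := by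
        simp; omega
      exact List.reverse_prefix.mp (List.prefix_of_prefix_length_le h1 h2 hlen)
    exact hd (List.eq_of_mem_replicate (hy.sublist.subset hdy))

theorem stmt_6 :
    {w : List ABC | ∃ (u : List ABC) (m : ℕ),
        (∀ x ∈ u, x = ABC.a ∨ x = ABC.b) ∧ 1 ≤ m ∧
        w = u ++ ABC.a :: List.replicate m ABC.c} =
      cc [ABC.a, ABC.c] 2 ∩
        (lconc (cc [ABC.c] 2) (cc [ABC.a] 2))ᶜ ∩
        (lconc (cc [ABC.c] 2) (cc [ABC.b] 2))ᶜ := by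
  ext w
  constructor
  · rintro ⟨u, m, hu, hm, rfl⟩
    refine ⟨⟨Or.inl ⟨u, List.replicate (m-1) ABC.c, ?_⟩, ?_⟩, ?_⟩
    · obtain ⟨m', rfl⟩ : ∃ m', m = m' + 1 := ⟨m - 1, by omega⟩
      simp [List.replicate_succ]
    · rintro ⟨x, phx, y, phy, hxy⟩
      have hcx : ABC.c ∈ x := (cc_single_iff _ _).mp phx
      have hay : ABC.a ∈ y := (cc_single_iff _ _).mp phy
      exact no_split u hu m ABC.a (by simp) x y hxy hcx hay
    · rintro ⟨x, phx, y, phy, hxy⟩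
      have hcx : ABC.c ∈ x := (cc_single_iff _ _).mp phx
      have hby : ABC.b ∈ y := (cc_single_iff _ _).mp phy
      exact no_split u hu m ABC.b (by simp) x y hxy hcx hby
  · rintro ⟨⟨hac, h1⟩, h2⟩
    -- w contains c
    have hcw : ABC.c ∈ w := by
      rcases hac with h | h
      · exact h.sublist.subset (by simp)
      · exact h.subset (by simp [wpow])
    set p : ABC → Bool := fun z => z ≠ ABC.c with hp
    have hxr : w.takeWhile p ++ w.dropWhile p = w := List.takeWhile_append_dropWhile (p := p) (l := w)
    set x := w.takeWhile p with hx
    have hcx : ABC.c ∉ x := by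
      intro h
      have := List.mem_takeWhile_imp h
      simp [hp] at this
    have hrne : w.dropWhile p ≠ [] := by
      intro h
      rw [List.dropWhile_eq_nil_iff] at h
      have := h _ hcw
      simp [hp] at this
    have hhead := List.head_dropWhile_not p (l := w) hrne
    obtain ⟨z, y, hzy⟩ : ∃ z y, w.dropWhile p = z :: y :=
      ⟨_, _, (List.cons_head_tail hrne).symm⟩
    have hzc : z = ABC.c := by
      have hz : (w.dropWhile p).head hrne = z := by
        rw [← Option.some_inj, ← List.head?_eq_head, hzy]; rfl
      rw [hz] at hhead
      simp [hp] at hhead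
      exact hhead
    subst hzc
    -- every letter of y is c
    have hyc : ∀ z' ∈ y, z' = ABC.c := by
      intro z' hz'
      cases z' with
      | a =>
        exfalso
        refine h1 ⟨x ++ [ABC.c], (cc_single_iff _ _).mpr (by simp), y,
          (cc_single_iff _ _).mpr hz', ?_⟩
        rw [← hxr, hzy]; simp
      | b =>
        exfalso
        refine h2 ⟨x ++ [ABC.c], (cc_single_iff _ _).mpr (by simp), y,
          (cc_single_iff _ _).mpr hz', ?_⟩
        rw [← hxr, hzy]; simp
      | c => rfl
    have hyrep : y = List.replicate y.length ABC.c := List.eq_replicate_of_mem hyc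
    set k := y.length + 1 with hk
    have hwxk : w = x ++ List.replicate k ABC.c := by
      rw [← hxr, hzy, hk, List.replicate_succ]
      rw [hyrep]; simp
    rcases hac with hinf | hsub
    · -- ac is a factor
      obtain ⟨s, t, hst⟩ := hinf
      have heq : x ++ List.replicate k ABC.c = s ++ (ABC.a :: ABC.c :: t) := by
        rw [hwxk] at hst
        rw [← hst]; simp
      rcases List.append_eq_append_iff.mp heq with ⟨a', _, hrep⟩ | ⟨rr, hxx, hrr⟩
      · exfalso
        have hmem : ABC.a ∈ a' ++ ABC.a :: ABC.c :: t := by simp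
        rw [← hrep] at hmem
        exact absurd (List.eq_of_mem_replicate hmem) (by simp)
      · have hcrr : ABC.c ∉ rr := fun h => hcx (by rw [hxx]; simp [h])
        rcases rr with _ | ⟨z, _ | ⟨z', rr''⟩⟩
        · exfalso
          simp only [List.nil_append] at hrr
          have hmem : ABC.a ∈ ABC.a :: ABC.c :: t := by simp
          rw [hrr] at hmem
          exact absurd (List.eq_of_mem_replicate hmem) (by simp)
        · -- rr = [z], so x = s ++ [z] and z = a
          simp only [List.cons_append, List.nil_append] at hrr
          injection hrr with h1 h2
          subst h1
          refine ⟨s, k, ?_, by omega, ?_⟩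
          · intro z' hz'
            have hzx : z' ∈ x := by rw [hxx]; simp [hz']
            cases z' with
            | a => exact Or.inl rfl
            | b => exact Or.inr rfl
            | c => exact absurd hzx hcx
          · rw [hwxk, hxx]; simp
        · exfalso
          simp only [List.cons_append] at hrr
          injection hrr with h1 h2
          injection h2 with h3 h4
          exact hcrr (by simp [h3])
    · -- acac subword: impossible
      exfalso
      rw [hwxk] at hsub
      have hpow : wpow [ABC.a, ABC.c] 2 = [ABC.a, ABC.c, ABC.a, ABC.c] := by
        simp [wpow]
      rw [hpow] at hsub
      obtain ⟨l₁, l₂, hsplit, hl₁, hl₂⟩ := List.sublist_append_iff.mp hsub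
      have hcl₁ : ABC.c ∉ l₁ := fun h => hcx (hl₁.subset h)
      have hal₂ : ABC.a ∉ l₂ := by
        intro h
        exact absurd (List.eq_of_mem_replicate (hl₂.subset h)) (by simp)
      rcases l₁ with _ | ⟨z, _ | ⟨z', l₁''⟩⟩
      · simp only [List.nil_append] at hsplit
        exact hal₂ (by rw [← hsplit]; simp)
      · simp only [List.cons_append, List.nil_append] at hsplit
        injection hsplit with h1 h2
        exact hal₂ (by rw [← h2]; simp)
      · simp only [List.cons_append] at hsplit
        injection hsplit with h1 h2
        injection h2 with h3 h4
        exact hcl₁ (by simp [← h3])
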